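/- If (z₁,z₂) : ℝ → ℂ² \ {0} solves (ż₁,ż₂) = −(1/2ℓ)·[[v₁, v₂−iv₃],[v₂+iv₃, −v₁]]·(z₁,z₂) with v = (v₁,v₂,v₃) : ℝ → ℝ³, then r := ((|z₁|²−|z₂|²)/(|z₁|²+|z₂|²), 2·Re(z̄₁z₂)/(|z₁|²+|z₂|²), 2·Im(z̄₁z₂)/(|z₁|²+|z₂|²)) solves the bicycle equation ℓ·ṙ = −v + (v·r)r in ℝ³. -/

import Mathlib

open Complex

private lemma hasDerivAt_re' {f : ℝ → ℂ} {f' : ℂ} {t : ℝ} (h : HasDerivAt f f' t) :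
    HasDerivAt (fun s => (f s).re) f'.re t := by
  exact (Complex.reCLM.hasFDerivAt.comp_hasDerivAt t h)

private lemma hasDerivAt_im' {f : ℝ → ℂ} {f' : ℂ} {t : ℝ} (h : HasDerivAt f f' t) :
    HasDerivAt (fun s => (f s).im) f'.im t := by
  exact (Complex.imCLM.hasFDerivAt.comp_hasDerivAt t h)

set_option maxHeartbeats 2000000 in
/-- Foote's theorem in dimension 3: a nonvanishing solution of the complex 2×2 linear
system projects, via the Hopf fibration, to a solution of the bicycle equation in ℝ³
(written componentwise). -/
theorem foote_hopf_fibration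
    (ℓ : ℝ) (hℓ : 0 < ℓ) (v₁ v₂ v₃ : ℝ → ℝ)
    (hv₁ : Continuous v₁) (hv₂ : Continuous v₂) (hv₃ : Continuous v₃)
    (z₁ z₂ : ℝ → ℂ) (hz₁ : ContDiff ℝ 1 z₁) (hz₂ : ContDiff ℝ 1 z₂)
    (hne : ∀ t, (z₁ t, z₂ t) ≠ (0, 0))
    (hode₁ : ∀ t, deriv z₁ t =
      -(1 / (2 * ℓ) : ℂ) * ((v₁ t : ℂ) * z₁ t + ((v₂ t : ℂ) - I * (v₃ t : ℂ)) * z₂ t))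
    (hode₂ : ∀ t, deriv z₂ t =
      -(1 / (2 * ℓ) : ℂ) * (((v₂ t : ℂ) + I * (v₃ t : ℂ)) * z₁ t - (v₁ t : ℂ) * z₂ t))
    (r₁ r₂ r₃ : ℝ → ℝ)
    (hr₁ : r₁ = fun t => (normSq (z₁ t) - normSq (z₂ t)) / (normSq (z₁ t) + normSq (z₂ t)))
    (hr₂ : r₂ = fun t => 2 * ((starRingEnd ℂ) (z₁ t) * z₂ t).re / (normSq (z₁ t) + normSq (z₂ t)))
    (hr₃ : r₃ = fun t => 2 * ((starRingEnd ℂ) (z₁ t) * z₂ t).im / (normSq (z₁ t) + normSq (z₂ t))) :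
    (∀ t, ℓ * deriv r₁ t = -v₁ t + (v₁ t * r₁ t + v₂ t * r₂ t + v₃ t * r₃ t) * r₁ t) ∧
    (∀ t, ℓ * deriv r₂ t = -v₂ t + (v₁ t * r₁ t + v₂ t * r₂ t + v₃ t * r₃ t) * r₂ t) ∧
    (∀ t, ℓ * deriv r₃ t = -v₃ t + (v₁ t * r₁ t + v₂ t * r₂ t + v₃ t * r₃ t) * r₃ t) := by
  subst hr₁ hr₂ hr₃
  have hℓ' : ℓ ≠ 0 := hℓ.ne'
  have key : ∀ t,
      (ℓ * deriv (fun t => (normSq (z₁ t) - normSq (z₂ t)) / (normSq (z₁ t) + normSq (z₂ t))) t =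
        -v₁ t + (v₁ t * ((normSq (z₁ t) - normSq (z₂ t)) / (normSq (z₁ t) + normSq (z₂ t)))
          + v₂ t * (2 * ((starRingEnd ℂ) (z₁ t) * z₂ t).re / (normSq (z₁ t) + normSq (z₂ t)))
          + v₃ t * (2 * ((starRingEnd ℂ) (z₁ t) * z₂ t).im / (normSq (z₁ t) + normSq (z₂ t)))) *
          ((normSq (z₁ t) - normSq (z₂ t)) / (normSq (z₁ t) + normSq (z₂ t)))) ∧
      (ℓ * deriv (fun t => 2 * ((starRingEnd ℂ) (z₁ t) * z₂ t).re / (normSq (z₁ t) + normSq (z₂ t))) t =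
        -v₂ t + (v₁ t * ((normSq (z₁ t) - normSq (z₂ t)) / (normSq (z₁ t) + normSq (z₂ t)))
          + v₂ t * (2 * ((starRingEnd ℂ) (z₁ t) * z₂ t).re / (normSq (z₁ t) + normSq (z₂ t)))
          + v₃ t * (2 * ((starRingEnd ℂ) (z₁ t) * z₂ t).im / (normSq (z₁ t) + normSq (z₂ t)))) *
          (2 * ((starRingEnd ℂ) (z₁ t) * z₂ t).re / (normSq (z₁ t) + normSq (z₂ t)))) ∧
      (ℓ * deriv (fun t => 2 * ((starRingEnd ℂ) (z₁ t) * z₂ t).im / (normSq (z₁ t) + normSq (z₂ t))) t =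
        -v₃ t + (v₁ t * ((normSq (z₁ t) - normSq (z₂ t)) / (normSq (z₁ t) + normSq (z₂ t)))
          + v₂ t * (2 * ((starRingEnd ℂ) (z₁ t) * z₂ t).re / (normSq (z₁ t) + normSq (z₂ t)))
          + v₃ t * (2 * ((starRingEnd ℂ) (z₁ t) * z₂ t).im / (normSq (z₁ t) + normSq (z₂ t)))) *
          (2 * ((starRingEnd ℂ) (z₁ t) * z₂ t).im / (normSq (z₁ t) + normSq (z₂ t)))) := by
    intro t
    have hda : HasDerivAt z₁ (deriv z₁ t) t := (hz₁.differentiable one_ne_zero t).hasDerivAt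
    have hdb : HasDerivAt z₂ (deriv z₂ t) t := (hz₂.differentiable one_ne_zero t).hasDerivAt
    have hx1 := hasDerivAt_re' hda
    have hy1 := hasDerivAt_im' hda
    have hx2 := hasDerivAt_re' hdb
    have hy2 := hasDerivAt_im' hdb
    have hN : (z₁ t).re * (z₁ t).re + (z₁ t).im * (z₁ t).im +
        ((z₂ t).re * (z₂ t).re + (z₂ t).im * (z₂ t).im) ≠ 0 := by
      intro h
      have h1 : normSq (z₁ t) + normSq (z₂ t) = 0 := by
        simpa [Complex.normSq_apply] using h
      rcases (add_eq_zero_iff_of_nonneg (normSq_nonneg _) (normSq_nonneg _)).mp h1 with ⟨h2, h3⟩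
      exact hne t
        (by simp [Prod.ext_iff, Complex.normSq_eq_zero.mp h2, Complex.normSq_eq_zero.mp h3])
    have hden : HasDerivAt (fun s => normSq (z₁ s) + normSq (z₂ s))
        (((deriv z₁ t).re * (z₁ t).re + (z₁ t).re * (deriv z₁ t).re +
          ((deriv z₁ t).im * (z₁ t).im + (z₁ t).im * (deriv z₁ t).im)) +
         ((deriv z₂ t).re * (z₂ t).re + (z₂ t).re * (deriv z₂ t).re +
          ((deriv z₂ t).im * (z₂ t).im + (z₂ t).im * (deriv z₂ t).im))) t := by
      simp only [Complex.normSq_apply]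
      exact ((hx1.mul hx1).add (hy1.mul hy1)).add ((hx2.mul hx2).add (hy2.mul hy2))
    have hNe : normSq (z₁ t) + normSq (z₂ t) ≠ 0 := by
      simpa [Complex.normSq_apply] using hN
    have hnum1 : HasDerivAt (fun s => normSq (z₁ s) - normSq (z₂ s))
        (((deriv z₁ t).re * (z₁ t).re + (z₁ t).re * (deriv z₁ t).re +
          ((deriv z₁ t).im * (z₁ t).im + (z₁ t).im * (deriv z₁ t).im)) -
         ((deriv z₂ t).re * (z₂ t).re + (z₂ t).re * (deriv z₂ t).re +
          ((deriv z₂ t).im * (z₂ t).im + (z₂ t).im * (deriv z₂ t).im))) t := by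
      simp only [Complex.normSq_apply]
      exact ((hx1.mul hx1).add (hy1.mul hy1)).sub ((hx2.mul hx2).add (hy2.mul hy2))
    have hnum2 : HasDerivAt (fun s => 2 * ((starRingEnd ℂ) (z₁ s) * z₂ s).re)
        (2 * (((deriv z₁ t).re * (z₂ t).re + (z₁ t).re * (deriv z₂ t).re) +
          ((deriv z₁ t).im * (z₂ t).im + (z₁ t).im * (deriv z₂ t).im))) t := by
      simp only [Complex.mul_re, Complex.conj_re, Complex.conj_im, neg_mul, sub_neg_eq_add]
      exact ((hx1.mul hx2).add (hy1.mul hy2)).const_mul 2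
    have hnum3 : HasDerivAt (fun s => 2 * ((starRingEnd ℂ) (z₁ s) * z₂ s).im)
        (2 * (((deriv z₁ t).re * (z₂ t).im + (z₁ t).re * (deriv z₂ t).im) -
          ((deriv z₁ t).im * (z₂ t).re + (z₁ t).im * (deriv z₂ t).re))) t := by
      simp only [Complex.mul_im, Complex.conj_re, Complex.conj_im, neg_mul]
      have : HasDerivAt (fun s => ((z₁ s).re * (z₂ s).im - (z₁ s).im * (z₂ s).re))
          (((deriv z₁ t).re * (z₂ t).im + (z₁ t).re * (deriv z₂ t).im) -
           ((deriv z₁ t).im * (z₂ t).re + (z₁ t).im * (deriv z₂ t).re)) t :=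
        (hx1.mul hy2).sub (hy1.mul hx2)
      have h' := this.const_mul (2 : ℝ)
      refine h'.congr_of_eventuallyEq (Filter.Eventually.of_forall fun s => ?_)
      ring
    have hd1 := (hnum1.div hden hNe).deriv
    simp only [Pi.div_def] at hd1
    have hd2 := (hnum2.div hden hNe).deriv
    simp only [Pi.div_def] at hd2
    have hd3 := (hnum3.div hden hNe).deriv
    simp only [Pi.div_def] at hd3
    have e1r : (deriv z₁ t).re =
        -(1/(2*ℓ)) * (v₁ t * (z₁ t).re + (v₂ t * (z₂ t).re + v₃ t * (z₂ t).im)) := by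
      rw [hode₁ t]
      simp [Complex.mul_re, Complex.mul_im, Complex.div_re, Complex.div_im, Complex.normSq_apply]
      try ring
      try tauto
    have e1i : (deriv z₁ t).im =
        -(1/(2*ℓ)) * (v₁ t * (z₁ t).im + (v₂ t * (z₂ t).im - v₃ t * (z₂ t).re)) := by
      rw [hode₁ t]
      simp [Complex.mul_re, Complex.mul_im, Complex.div_re, Complex.div_im, Complex.normSq_apply]
      try ring
      try tauto
    have e2r : (deriv z₂ t).re =
        -(1/(2*ℓ)) * (v₂ t * (z₁ t).re - v₃ t * (z₁ t).im - v₁ t * (z₂ t).re) := by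
      rw [hode₂ t]
      simp [Complex.mul_re, Complex.mul_im, Complex.div_re, Complex.div_im, Complex.normSq_apply]
      try ring
      try tauto
    have e2i : (deriv z₂ t).im =
        -(1/(2*ℓ)) * (v₂ t * (z₁ t).im + v₃ t * (z₁ t).re - v₁ t * (z₂ t).im) := by
      rw [hode₂ t]
      simp [Complex.mul_re, Complex.mul_im, Complex.div_re, Complex.div_im, Complex.normSq_apply]
      try ring
      try tauto
    refine ⟨?_, ?_, ?_⟩
    · rw [hd1, e1r, e1i, e2r, e2i]
      simp only [Complex.normSq_apply, Complex.mul_re, Complex.mul_im, Complex.conj_re,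
        Complex.conj_im]
      have hN2 : (z₁ t).re ^ 2 + (z₁ t).im ^ 2 + ((z₂ t).re ^ 2 + (z₂ t).im ^ 2) ≠ 0 := by
        convert hN using 1; ring
      field_simp [hN, hN2]
      ring
    · rw [hd2, e1r, e1i, e2r, e2i]
      simp only [Complex.normSq_apply, Complex.mul_re, Complex.mul_im, Complex.conj_re,
        Complex.conj_im]
      have hN2 : (z₁ t).re ^ 2 + (z₁ t).im ^ 2 + ((z₂ t).re ^ 2 + (z₂ t).im ^ 2) ≠ 0 := by
        convert hN using 1; ring
      field_simp [hN, hN2]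
      ring
    · rw [hd3, e1r, e1i, e2r, e2i]
      simp only [Complex.normSq_apply, Complex.mul_re, Complex.mul_im, Complex.conj_re,
        Complex.conj_im]
      have hN2 : (z₁ t).re ^ 2 + (z₁ t).im ^ 2 + ((z₂ t).re ^ 2 + (z₂ t).im ^ 2) ≠ 0 := by
        convert hN using 1; ring
      field_simp [hN, hN2]
      ring
  exact ⟨fun t => (key t).1, fun t => (key t).2.1, fun t => (key t).2.2⟩
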